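/- arXiv:1406.5915 — 3 statements merged into one kernel-verified Lean document; each statement's English description precedes it below -/
import Mathlib

section
/- (Carter's observation) Let T be a stress-energy tensor on (N+1)-dimensional Minkowski space satisfying the dominant energy condition, and suppose T ≠ 0 (as a matrix). Then for every future-directed timelike vector v, the image u(v) = -ηTv is nonzero. Equivalently, under the dominant energy condition, a vector that is sent to zero by the associated endomorphism of a nontrivial T must be lightlike (or zero). -/
open Matrix

set_option maxHeartbeats 800000

/-- The Minkowski metric `diag(-1,1,…,1)` on `ℝ^{N+1}`. -/
noncomputable def eta (N : ℕ) : Matrix (Fin (N+1)) (Fin (N+1)) ℝ :=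
  Matrix.diagonal (fun i => if i = 0 then (-1 : ℝ) else 1)

/-- The Minkowski bilinear form `η(x,y) = -x₀y₀ + ∑ᵢ xᵢyᵢ`. -/
noncomputable def mdot {N : ℕ} (x y : Fin (N+1) → ℝ) : ℝ :=
  x ⬝ᵥ (eta N).mulVec y

/-- Future-directed timelike: `η(v,v) < 0` and `v₀ > 0`. -/
def FDTimelike {N : ℕ} (v : Fin (N+1) → ℝ) : Prop :=
  mdot v v < 0 ∧ 0 < v 0

/-- Future-directed lightlike: `v ≠ 0`, `η(v,v) = 0` and `v₀ > 0`. -/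
def FDLightlike {N : ℕ} (v : Fin (N+1) → ℝ) : Prop :=
  v ≠ 0 ∧ mdot v v = 0 ∧ 0 < v 0

/-- Future-directed causal: future-directed timelike or lightlike. -/
def FDCausal {N : ℕ} (v : Fin (N+1) → ℝ) : Prop :=
  FDTimelike v ∨ FDLightlike v

/-- The bilinear form associated to a matrix: `T(v,w) = vᵀ T w`. -/
noncomputable def Tbil {N : ℕ} (T : Matrix (Fin (N+1)) (Fin (N+1)) ℝ)
    (v w : Fin (N+1) → ℝ) : ℝ :=
  v ⬝ᵥ T.mulVec w

/-- The endomorphism associated to a stress-energy tensor: `u(v) = -ηTv`. -/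
noncomputable def endo {N : ℕ} (T : Matrix (Fin (N+1)) (Fin (N+1)) ℝ)
    (v : Fin (N+1) → ℝ) : Fin (N+1) → ℝ :=
  -((eta N).mulVec (T.mulVec v))

/-- The dominant energy condition: every future-directed causal vector is
sent by the associated endomorphism to a future-directed causal vector or zero. -/
def DEC {N : ℕ} (T : Matrix (Fin (N+1)) (Fin (N+1)) ℝ) : Prop :=
  ∀ v : Fin (N+1) → ℝ, FDCausal v → FDCausal (endo T v) ∨ endo T v = 0

-- aux lemmas
lemma endo_add {N : ℕ} (T : Matrix (Fin (N+1)) (Fin (N+1)) ℝ) (v w : Fin (N+1) → ℝ) :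
    endo T (v + w) = endo T v + endo T w := by
  simp only [endo, mulVec_add, neg_add]

lemma endo_smul {N : ℕ} (T : Matrix (Fin (N+1)) (Fin (N+1)) ℝ) (c : ℝ) (v : Fin (N+1) → ℝ) :
    endo T (c • v) = c • endo T v := by
  simp [endo, mulVec_smul]

lemma fdcausal_pos {N : ℕ} {w : Fin (N+1) → ℝ} (h : FDCausal w) : 0 < w 0 := by
  rcases h with ⟨_, h⟩ | ⟨_, _, h⟩ <;> exact h

lemma mdot_expand {N : ℕ} (v x : Fin (N+1) → ℝ) (ε : ℝ) :
    mdot (v + ε • x) (v + ε • x)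
      = mdot v v + ε * mdot v x + ε * mdot x v + ε^2 * mdot x x := by
  simp only [mdot, mulVec_add, mulVec_smul, dotProduct_add, add_dotProduct,
    dotProduct_smul, smul_dotProduct, smul_eq_mul]
  ring

lemma eta_eta_mulVec {N : ℕ} (x : Fin (N+1) → ℝ) :
    (eta N).mulVec ((eta N).mulVec x) = x := by
  rw [mulVec_mulVec]
  have : eta N * eta N = 1 := by
    simp only [eta, diagonal_mul_diagonal]
    ext i j
    by_cases h : i = 0 <;> simp [h, Matrix.one_apply, diagonal]
  rw [this, one_mulVec]

/-- Carter's observation: under the dominant energy condition, if `T` is not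
zero then the associated endomorphism sends every future-directed timelike
vector to a nonzero vector. -/
theorem carter_observation {N : ℕ} (hN : 1 ≤ N)
    (T : Matrix (Fin (N+1)) (Fin (N+1)) ℝ) (hsymm : T.IsSymm)
    (hdec : DEC T) (hT : T ≠ 0) :
    ∀ v : Fin (N+1) → ℝ, FDTimelike v → endo T v ≠ 0 := by
  intro v hv h0
  apply hT
  -- show every endo T x = 0
  have key : ∀ x : Fin (N+1) → ℝ, endo T x = 0 := by
    intro x
    by_contra hu
    set a := mdot v v with ha
    set B := |mdot v x| + |mdot x v| + |mdot x x| + |x 0| + 1 with hB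
    have hBpos : 0 < B := by positivity
    set ε : ℝ := min 1 (min (v 0 / (2*B)) (-a / (2*B))) with hε
    have hapos : 0 < -a := by linarith [hv.1]
    have hv0 : 0 < v 0 := hv.2
    have hεpos : 0 < ε := by
      apply lt_min; norm_num
      exact lt_min (div_pos hv0 (by positivity)) (div_pos hapos (by positivity))
    have hε1 : ε ≤ 1 := min_le_left _ _
    have hεv : ε ≤ v 0 / (2*B) := le_trans (min_le_right _ _) (min_le_left _ _)
    have hεa : ε ≤ -a / (2*B) := le_trans (min_le_right _ _) (min_le_right _ _)
    have hεB : ε * B ≤ -a / 2 := by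
      have h := mul_le_mul_of_nonneg_right hεa hBpos.le
      have heq : -a / (2*B) * B = -a/2 := by field_simp
      linarith
    have hεB' : ε * B ≤ v 0 / 2 := by
      have h := mul_le_mul_of_nonneg_right hεv hBpos.le
      have heq : v 0 / (2*B) * B = v 0 /2 := by field_simp
      linarith
    have habs1 := le_abs_self (mdot v x)
    have habs1' := neg_abs_le (mdot v x)
    have habs2 := le_abs_self (mdot x v)
    have habs2' := neg_abs_le (mdot x v)
    have habs3 := le_abs_self (mdot x x)
    have habs3' := neg_abs_le (mdot x x)
    have habs4 := le_abs_self (x 0)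
    have habs4' := neg_abs_le (x 0)
    have hε2 : ε^2 ≤ ε := by nlinarith
    have hε2pos : 0 ≤ ε^2 := sq_nonneg ε
    clear_value a B ε
    clear hε hεv hεa
    -- timelike for both signs
    have key1 : ∀ s m : ℝ, s = 1 ∨ s = -1 → (s*ε) * m ≤ ε * |m| := by
      intro s m hs
      rcases hs with h | h
      · subst h; rw [one_mul]
        exact mul_le_mul_of_nonneg_left (le_abs_self m) hεpos.le
      · subst h
        have : (-1)*ε*m = ε * (-m) := by ring
        rw [this]
        exact mul_le_mul_of_nonneg_left (neg_le_abs m) hεpos.le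
    have tl : ∀ s : ℝ, s = 1 ∨ s = -1 → FDTimelike (v + (s*ε) • x) := by
      intro s hs
      have hs2 : s^2 = 1 := by rcases hs with h | h <;> (subst h; norm_num)
      constructor
      · rw [mdot_expand]
        have h1 := key1 s (mdot v x) hs
        have h2 := key1 s (mdot x v) hs
        have h3 : (s*ε)^2 * mdot x x ≤ ε * |mdot x x| := by
          have he : (s*ε)^2 = ε^2 := by rw [mul_pow, hs2, one_mul]
          rw [he]
          calc ε^2 * mdot x x ≤ ε^2 * |mdot x x| :=
                mul_le_mul_of_nonneg_left (le_abs_self _) hε2pos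
            _ ≤ ε * |mdot x x| := mul_le_mul_of_nonneg_right hε2 (abs_nonneg _)
        have hsum : ε * (|mdot v x| + |mdot x v| + |mdot x x|) ≤ ε * B := by
          apply mul_le_mul_of_nonneg_left _ hεpos.le
          have := abs_nonneg (x 0)
          linarith
        linarith
      · have he : (v + (s*ε) • x) 0 = v 0 + (s*ε) * x 0 := by simp
        rw [he]
        have h4 : -(ε * |x 0|) ≤ (s*ε) * x 0 := by
          have := key1 s (-(x 0)) hs
          have h' : (s*ε) * -(x 0) ≤ ε * |x 0| := by rwa [abs_neg] at this
          linarith [h']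
        have hx0B : ε * |x 0| ≤ ε * B := by
          apply mul_le_mul_of_nonneg_left _ hεpos.le
          have h1 := abs_nonneg (mdot v x)
          have h2 := abs_nonneg (mdot x v)
          have h3 := abs_nonneg (mdot x x)
          linarith
        linarith
    have tl1 := tl 1 (Or.inl rfl)
    have tl2 := tl (-1) (Or.inr rfl)
    have e1 : endo T (v + (1*ε) • x) = ε • endo T x := by
      rw [endo_add, endo_smul, h0, zero_add, one_mul]
    have e2 : endo T (v + ((-1)*ε) • x) = (-ε) • endo T x := by
      rw [endo_add, endo_smul, h0, zero_add]; norm_num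
    rcases hdec _ (Or.inl tl1) with hc1 | hz1
    · rcases hdec _ (Or.inl tl2) with hc2 | hz2
      · rw [e1] at hc1; rw [e2] at hc2
        have p1 := fdcausal_pos hc1
        have p2 := fdcausal_pos hc2
        simp only [Pi.smul_apply, smul_eq_mul] at p1 p2
        nlinarith
      · rw [e2] at hz2
        exact hu (by simpa [smul_eq_zero, hεpos.ne'] using hz2)
    · rw [e1] at hz1
      exact hu (by simpa [smul_eq_zero, hεpos.ne'] using hz1)
  -- from endo = 0 conclude T = 0
  have hTv : ∀ x, T.mulVec x = 0 := by
    intro x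
    have h := key x
    have : (eta N).mulVec (T.mulVec x) = 0 := by
      have := congrArg Neg.neg h
      simpa [endo] using this
    have h2 := congrArg ((eta N).mulVec) this
    rwa [eta_eta_mulVec, mulVec_zero] at h2
  ext i j
  have := congrFun (hTv (Pi.single j 1)) i
  simpa [mulVec, dotProduct, Pi.single_apply] using this
end

section
/- Let T be a stress-energy tensor on (N+1)-dimensional Minkowski space satisfying the dominant energy condition. Let V be a future-directed timelike vector normalized so that η(V,V) = -1, and let A be a vector with η(V,A) = 0. Then |T(V,A)| ≤ √(η(A,A)) · T(V,V). -/
open Matrix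

lemma mdot_eq {N : ℕ} (x y : Fin (N+1) → ℝ) :
    mdot x y = -(x 0 * y 0) + ∑ i : Fin N, x i.succ * y i.succ := by
  simp [mdot, eta, Matrix.mulVec_diagonal, dotProduct, Fin.sum_univ_succ,
    Fin.succ_ne_zero]

lemma sdot_self_nonneg {N : ℕ} (x : Fin (N+1) → ℝ) :
    0 ≤ ∑ i : Fin N, x i.succ * x i.succ :=
  Finset.sum_nonneg fun i _ => mul_self_nonneg _

lemma sdot_cauchy {N : ℕ} (x y : Fin (N+1) → ℝ) :
    (∑ i : Fin N, x i.succ * y i.succ) ^ 2 ≤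
      (∑ i : Fin N, x i.succ * x i.succ) * (∑ i : Fin N, y i.succ * y i.succ) := by
  have := Finset.sum_mul_sq_le_sq_mul_sq Finset.univ (fun i : Fin N => x i.succ)
    (fun i : Fin N => y i.succ)
  calc (∑ i : Fin N, x i.succ * y i.succ) ^ 2
      ≤ (∑ i : Fin N, x i.succ ^ 2) * (∑ i : Fin N, y i.succ ^ 2) := this
    _ = _ := by simp [sq]

/-- If `u` is future causal (or zero) and `V` is future causal-type
(`V₀ > 0`, `η(V,V) ≤ 0`), then `η(u,V) ≤ 0`. -/
lemma causal_mdot_nonpos {N : ℕ} {u V : Fin (N+1) → ℝ}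
    (hu : FDCausal u ∨ u = 0) (hV0 : 0 < V 0) (hVV : mdot V V ≤ 0) :
    mdot u V ≤ 0 := by
  rcases hu with hu | rfl
  · have hu0 : 0 < u 0 := by rcases hu with h | h; exacts [h.2, h.2.2]
    have huu : mdot u u ≤ 0 := by rcases hu with h | h; exacts [le_of_lt h.1, le_of_eq h.2.1]
    rw [mdot_eq] at huu hVV ⊢
    set S := ∑ i : Fin N, u i.succ * V i.succ with hS
    set Su := ∑ i : Fin N, u i.succ * u i.succ with hSu
    set Sv := ∑ i : Fin N, V i.succ * V i.succ with hSv
    have h1 : S ^ 2 ≤ Su * Sv := sdot_cauchy u V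
    have h2 : 0 ≤ Su := sdot_self_nonneg u
    have h3 : 0 ≤ Sv := sdot_self_nonneg V
    have h4 : Su ≤ u 0 * u 0 := by linarith
    have h5 : Sv ≤ V 0 * V 0 := by linarith
    have h6 : Su * Sv ≤ (u 0 * u 0) * (V 0 * V 0) :=
      mul_le_mul h4 h5 h3 (mul_self_nonneg _)
    nlinarith [sq_nonneg (S - u 0 * V 0), sq_nonneg (S + u 0 * V 0),
      mul_pos hu0 hV0]
  · simp [mdot_eq]
lemma mdot_comm {N : ℕ} (x y : Fin (N+1) → ℝ) : mdot x y = mdot y x := by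
  simp [mdot_eq, mul_comm]

lemma eta_mul_eta_dot {N : ℕ} (a w : Fin (N+1) → ℝ) :
    (eta N).mulVec a ⬝ᵥ (eta N).mulVec w = a ⬝ᵥ w := by
  simp only [eta, Matrix.mulVec_diagonal, dotProduct]
  apply Finset.sum_congr rfl
  intro i _
  by_cases h : i = 0 <;> simp [h]

lemma endo_mdot {N : ℕ} (T : Matrix (Fin (N+1)) (Fin (N+1)) ℝ)
    (v w : Fin (N+1) → ℝ) : mdot (endo T v) w = -(Tbil T w v) := by
  simp only [mdot, endo, Tbil, neg_dotProduct, neg_inj]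
  rw [eta_mul_eta_dot, dotProduct_comm]

lemma mdot_bilin {N : ℕ} (c s : ℝ) (V A : Fin (N+1) → ℝ) :
    mdot (c • V + s • A) (c • V + s • A)
      = c*c*mdot V V + c*s*mdot V A + s*c*mdot A V + s*s*mdot A A := by
  simp [mdot, Matrix.mulVec_add, Matrix.mulVec_smul, dotProduct_add,
    dotProduct_smul, add_dotProduct, smul_dotProduct, smul_eq_mul]
  ring

lemma Tbil_right {N : ℕ} (T : Matrix (Fin (N+1)) (Fin (N+1)) ℝ)
    (c s : ℝ) (V A : Fin (N+1) → ℝ) :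
    Tbil T V (c • V + s • A) = c * Tbil T V V + s * Tbil T V A := by
  simp [Tbil, Matrix.mulVec_add, Matrix.mulVec_smul, dotProduct_add,
    dotProduct_smul, smul_eq_mul]

/-- Inequality (1): `|T(V,A)| ≤ |A| ⬝ T(V,V)` for `V` unit timelike and
`A` orthogonal to `V`. -/
theorem dec_ineq_one {N : ℕ} (hN : 1 ≤ N)
    (T : Matrix (Fin (N+1)) (Fin (N+1)) ℝ) (hsymm : T.IsSymm)
    (hdec : DEC T)
    (V : Fin (N+1) → ℝ) (hV : FDTimelike V) (hVnorm : mdot V V = -1)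
    (A : Fin (N+1) → ℝ) (horth : mdot V A = 0) :
    |Tbil T V A| ≤ Real.sqrt (mdot A A) * Tbil T V V := by
  obtain ⟨hVt, hV0⟩ := hV
  have hVsum : -(V 0 * V 0) + ∑ i : Fin N, V i.succ * V i.succ = -1 := by
    rw [← mdot_eq]; exact hVnorm
  have horth' : ∑ i : Fin N, V i.succ * A i.succ = V 0 * A 0 := by
    have h := horth; rw [mdot_eq] at h; linarith
  have hC : (V 0 * A 0) ^ 2
      ≤ (∑ i : Fin N, V i.succ * V i.succ) * (∑ i : Fin N, A i.succ * A i.succ) := by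
    rw [← horth']; exact sdot_cauchy V A
  have hV1 : 1 ≤ V 0 * V 0 := by nlinarith [sdot_self_nonneg V]
  have hSV : ∑ i : Fin N, V i.succ * V i.succ = V 0 * V 0 - 1 := by linarith
  rw [hSV] at hC
  have hmAA : 0 ≤ mdot A A := by
    rw [mdot_eq]
    nlinarith [sdot_self_nonneg A, mul_pos hV0 hV0, sq_nonneg (A 0)]
  have hA0sq : A 0 * A 0 ≤ (V 0 * V 0 - 1) * mdot A A := by
    rw [mdot_eq]; nlinarith [hC]
  set a := Real.sqrt (mdot A A) with ha
  have ha0 : 0 ≤ a := Real.sqrt_nonneg _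
  have key : ∀ c : ℝ, a < c → |Tbil T V A| ≤ c * Tbil T V V := by
    intro c hc
    have hc0 : 0 < c := lt_of_le_of_lt ha0 hc
    have hc2 : mdot A A < c ^ 2 := (Real.sqrt_lt' hc0).mp hc
    have hw : ∀ s : ℝ, s = 1 ∨ s = -1 → FDTimelike (c • V + s • A) := by
      intro s hs
      have hs2 : s * s = 1 := by rcases hs with rfl | rfl <;> norm_num
      constructor
      · rw [mdot_bilin, hVnorm, horth, mdot_comm A V, horth]
        nlinarith
      · have hw0 : (c • V + s • A) 0 = c * V 0 + s * A 0 := by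
          simp [smul_eq_mul]
        rw [hw0]
        have hcV : 0 < c * V 0 := mul_pos hc0 hV0
        have hbound : A 0 * A 0 < (c * V 0) * (c * V 0) := by
          nlinarith
        have habs : -(c * V 0) < A 0 ∧ A 0 < c * V 0 := by
          constructor <;> nlinarith
        rcases hs with rfl | rfl
        · have := habs.1; linarith
        · have := habs.2; linarith
    have hside : ∀ s : ℝ, s = 1 ∨ s = -1 →
        0 ≤ c * Tbil T V V + s * Tbil T V A := by
      intro s hs
      have hcaus := hdec _ (Or.inl (hw s hs))
      have hnp : mdot (endo T (c • V + s • A)) V ≤ 0 := by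
        exact causal_mdot_nonpos hcaus hV0 (le_of_lt hVt)
      rw [endo_mdot, Tbil_right] at hnp
      linarith
    have h1 := hside 1 (Or.inl rfl)
    have h2 := hside (-1) (Or.inr rfl)
    rw [abs_le]
    constructor <;> linarith
  have hTVV : 0 ≤ Tbil T V V := by
    have h := key (a + 1) (by linarith)
    nlinarith [abs_nonneg (Tbil T V A)]
  by_contra hcon
  push_neg at hcon
  have hTVVpos : 0 < Tbil T V V := by
    rcases lt_or_eq_of_le hTVV with h | h
    · exact h
    · exfalso
      have h1 := key (a + 1) (by linarith)
      rw [← h] at h1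
      have h2 : 0 ≤ |Tbil T V A| := abs_nonneg _
      nlinarith
  have hdiv : a < |Tbil T V A| / Tbil T V V := by
    rw [lt_div_iff₀ hTVVpos]; linarith
  set c := (a + |Tbil T V A| / Tbil T V V) / 2 with hcdef
  have hac : a < c := by rw [hcdef]; linarith
  have hcb : c * Tbil T V V < |Tbil T V A| := by
    have : c < |Tbil T V A| / Tbil T V V := by rw [hcdef]; linarith
    calc c * Tbil T V V < (|Tbil T V A| / Tbil T V V) * Tbil T V V :=
          mul_lt_mul_of_pos_right this hTVVpos
      _ = |Tbil T V A| := div_mul_cancel₀ _ (ne_of_gt hTVVpos)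
  have := key c hac
  linarith
end

section
/- Let T be a stress-energy tensor on (N+1)-dimensional Minkowski space satisfying the dominant energy condition. Let V be a future-directed timelike vector normalized so that η(V,V) = -1, and let A, B be vectors with η(V,A) = η(V,B) = 0. Then |T(A,B)| ≤ T(V,V) · √(η(A,A)) · √(η(B,B)). -/
open Matrix

/- ### auxiliary lemmas -/


/-- spatial dot product -/
noncomputable def sdot {N : ℕ} (x y : Fin (N+1) → ℝ) : ℝ :=
  ∑ i : Fin N, x i.succ * y i.succ

lemma mdot_split {N : ℕ} (x y : Fin (N+1) → ℝ) :
    mdot x y = -(x 0 * y 0) + sdot x y := by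
  simp [mdot, sdot, eta, dotProduct, Matrix.mulVec_diagonal, Fin.sum_univ_succ,
    Fin.succ_ne_zero]

lemma sdot_sq_le {N : ℕ} (x y : Fin (N+1) → ℝ) :
    (sdot x y) ^ 2 ≤ sdot x x * sdot y y := by
  have := Finset.sum_mul_sq_le_sq_mul_sq Finset.univ (fun i : Fin N => x i.succ)
    (fun i : Fin N => y i.succ)
  simpa [sdot, pow_two, mul_assoc] using this

lemma sdot_self_nonneg_s6 {N : ℕ} (x : Fin (N+1) → ℝ) : 0 ≤ sdot x x :=
  Finset.sum_nonneg fun i _ => mul_self_nonneg _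

lemma mdot_add_right {N : ℕ} (x y z : Fin (N+1) → ℝ) :
    mdot x (y + z) = mdot x y + mdot x z := by
  simp [mdot, Matrix.mulVec_add, dotProduct_add]

lemma mdot_smul_right {N : ℕ} (c : ℝ) (x y : Fin (N+1) → ℝ) :
    mdot x (c • y) = c * mdot x y := by
  simp [mdot, Matrix.mulVec_smul, dotProduct_smul]

lemma mdot_add_left {N : ℕ} (x y z : Fin (N+1) → ℝ) :
    mdot (x + y) z = mdot x z + mdot y z := by
  simp [mdot, add_dotProduct]

lemma mdot_smul_left {N : ℕ} (c : ℝ) (x y : Fin (N+1) → ℝ) :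
    mdot (c • x) y = c * mdot x y := by
  simp [mdot, smul_dotProduct]

lemma Tbil_add_right {N : ℕ} (T : Matrix (Fin (N+1)) (Fin (N+1)) ℝ) (x y z : Fin (N+1) → ℝ) :
    Tbil T x (y + z) = Tbil T x y + Tbil T x z := by
  simp [Tbil, Matrix.mulVec_add, dotProduct_add]

lemma Tbil_smul_right {N : ℕ} (T : Matrix (Fin (N+1)) (Fin (N+1)) ℝ) (c : ℝ) (x y : Fin (N+1) → ℝ) :
    Tbil T x (c • y) = c * Tbil T x y := by
  simp [Tbil, Matrix.mulVec_smul, dotProduct_smul]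

lemma Tbil_add_left {N : ℕ} (T : Matrix (Fin (N+1)) (Fin (N+1)) ℝ) (x y z : Fin (N+1) → ℝ) :
    Tbil T (x + y) z = Tbil T x z + Tbil T y z := by
  simp [Tbil, add_dotProduct]

lemma Tbil_smul_left {N : ℕ} (T : Matrix (Fin (N+1)) (Fin (N+1)) ℝ) (c : ℝ) (x y : Fin (N+1) → ℝ) :
    Tbil T (c • x) y = c * Tbil T x y := by
  simp [Tbil, smul_dotProduct]

/-- For causal `x`, the time component dominates the spatial norm squared. -/
lemma causal_facts {N : ℕ} {x : Fin (N+1) → ℝ} (hx : FDCausal x) :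
    0 < x 0 ∧ sdot x x ≤ x 0 * x 0 := by
  rcases hx with ⟨h1, h2⟩ | ⟨_, h1, h2⟩ <;>
    [ (refine ⟨h2, ?_⟩; rw [mdot_split] at h1; linarith) ;
      (refine ⟨h2, ?_⟩; rw [mdot_split] at h1; linarith) ]

/-- η of two future causal vectors is nonpositive. -/
lemma mdot_causal_nonpos {N : ℕ} {x y : Fin (N+1) → ℝ}
    (hx : FDCausal x) (hy : FDCausal y) : mdot x y ≤ 0 := by
  obtain ⟨hx0, hxs⟩ := causal_facts hx
  obtain ⟨hy0, hys⟩ := causal_facts hy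
  have hcs := sdot_sq_le x y
  have h1 := sdot_self_nonneg_s6 x
  have h2 := sdot_self_nonneg_s6 y
  rw [mdot_split]
  nlinarith [sq_nonneg (sdot x y), mul_pos hx0 hy0]

/-- `T(v,w) = -η(u(v),w)`. -/
lemma mdot_endo {N : ℕ} (T : Matrix (Fin (N+1)) (Fin (N+1)) ℝ) (hsymm : T.IsSymm)
    (v w : Fin (N+1) → ℝ) : mdot (endo T v) w = -(Tbil T v w) := by
  have hTv : Tbil T v w = (T.mulVec v) ⬝ᵥ w := by
    rw [Tbil, dotProduct_mulVec, ← Matrix.mulVec_transpose, hsymm.eq]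
  have heta : ∀ z : Fin (N+1) → ℝ, ((eta N).mulVec z) = fun i =>
      (if i = 0 then (-1:ℝ) else 1) * z i := by
    intro z; funext i; simp [eta, Matrix.mulVec_diagonal]
  rw [hTv, mdot]
  simp only [endo, heta, dotProduct, Pi.neg_apply, neg_mul, ← Finset.sum_neg_distrib]
  apply Finset.sum_congr rfl
  intro i _
  by_cases h : i = 0 <;> simp [h] <;> ring

/-- DEC implies `T(v,w) ≥ 0` for future causal `v, w`. -/
lemma Tbil_nonneg {N : ℕ} (T : Matrix (Fin (N+1)) (Fin (N+1)) ℝ) (hsymm : T.IsSymm)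
    (hdec : DEC T) {v w : Fin (N+1) → ℝ} (hv : FDCausal v) (hw : FDCausal w) :
    0 ≤ Tbil T v w := by
  rcases hdec v hv with h | h
  · have := mdot_causal_nonpos h hw
    rw [mdot_endo T hsymm] at this
    linarith
  · have : mdot (endo T v) w = 0 := by rw [h]; simp [mdot, zero_dotProduct]
    rw [mdot_endo T hsymm] at this
    linarith

/-- A nonzero vector orthogonal to a unit timelike vector is spacelike,
and `√(η(A,A)) • V ± A` is future lightlike. -/
lemma orth_key {N : ℕ} {V A : Fin (N+1) → ℝ} (hV : FDTimelike V) (hVnorm : mdot V V = -1)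
    (horth : mdot V A = 0) (hA : A ≠ 0) :
    0 < mdot A A ∧ FDCausal (Real.sqrt (mdot A A) • V + A) := by
  obtain ⟨hVt, hV0⟩ := hV
  have hvv : sdot V V = V 0 * V 0 - 1 := by rw [mdot_split] at hVnorm; linarith
  have hva : sdot V A = V 0 * A 0 := by rw [mdot_split] at horth; linarith
  have hcs := sdot_sq_le V A
  rw [hvv, hva] at hcs
  have haa : mdot A A = -(A 0 * A 0) + sdot A A := mdot_split A A
  have hAApos : 0 < mdot A A := by
    rcases lt_or_ge 0 (mdot A A) with h | h
    · exact h
    · exfalso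
      -- sdot A A ≤ A0², and V0² A0² ≤ (V0²-1) sdot A A
      have hs : sdot A A ≤ A 0 * A 0 := by linarith
      have hV1 : 1 ≤ V 0 * V 0 := by nlinarith [sdot_self_nonneg_s6 V]
      have hA0sq : A 0 * A 0 ≤ 0 := by nlinarith [sdot_self_nonneg_s6 A, sq_nonneg (V 0 * A 0)]
      have hA0 : A 0 = 0 := by nlinarith [mul_self_nonneg (A 0)]
      have hsz : sdot A A = 0 := by
        have := sdot_self_nonneg_s6 A
        rw [hA0] at hs
        linarith
      apply hA
      funext i
      refine Fin.cases ?_ (fun j => ?_) i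
      · exact hA0
      · have : ∀ j ∈ Finset.univ, 0 ≤ A (Fin.succ j) * A (Fin.succ j) :=
          fun j _ => mul_self_nonneg _
        have := (Finset.sum_eq_zero_iff_of_nonneg this).mp hsz j (Finset.mem_univ j)
        have := mul_self_eq_zero.mp this
        simpa using this
  refine ⟨hAApos, ?_⟩
  set s := Real.sqrt (mdot A A) with hs
  have hs2 : s ^ 2 = mdot A A := Real.sq_sqrt hAApos.le
  have hspos : 0 < s := Real.sqrt_pos.mpr hAApos
  -- |A 0| < s * V 0
  have hbound : A 0 * A 0 < (s * V 0) * (s * V 0) := by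
    nlinarith [sdot_self_nonneg_s6 A, mul_pos hspos hV0]
  have h0 : 0 < (s • V + A) 0 := by
    have h : 0 < s * V 0 + A 0 := by
      nlinarith [mul_pos hspos hV0, sq_nonneg (s * V 0 + A 0)]
    simpa [Pi.add_apply, Pi.smul_apply, smul_eq_mul] using h
  right
  refine ⟨?_, ?_, h0⟩
  · intro hz
    rw [hz] at h0; simp at h0
  · rw [mdot_add_left, mdot_add_right, mdot_add_right, mdot_smul_left, mdot_smul_left,
      mdot_smul_right, hVnorm, horth, mdot_comm A (s • V), mdot_smul_left, horth]
    nlinarith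

lemma mdot_neg_neg {N : ℕ} (x : Fin (N+1) → ℝ) : mdot (-x) (-x) = mdot x x := by
  simp [mdot, Matrix.mulVec_neg, dotProduct_neg, neg_dotProduct]

/-- Inequality (2): `|T(A,B)| ≤ T(V,V) ⬝ |A| ⬝ |B|` for `V` unit timelike and
`A`, `B` orthogonal to `V`. -/
theorem dec_ineq_two {N : ℕ} (hN : 1 ≤ N)
    (T : Matrix (Fin (N+1)) (Fin (N+1)) ℝ) (hsymm : T.IsSymm)
    (hdec : DEC T)
    (V : Fin (N+1) → ℝ) (hV : FDTimelike V) (hVnorm : mdot V V = -1)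
    (A B : Fin (N+1) → ℝ) (horthA : mdot V A = 0) (horthB : mdot V B = 0) :
    |Tbil T A B| ≤ Tbil T V V * Real.sqrt (mdot A A) * Real.sqrt (mdot B B) := by
  by_cases hA : A = 0
  · subst hA
    simp [Tbil, zero_dotProduct, mdot, Matrix.mulVec_zero]
  by_cases hB : B = 0
  · subst hB
    simp [Tbil, Matrix.mulVec_zero, dotProduct_zero, mdot]
  obtain ⟨hAA, hcA⟩ := orth_key hV hVnorm horthA hA
  obtain ⟨hBB, hcB⟩ := orth_key hV hVnorm horthB hB
  have horthA' : mdot V (-A) = 0 := by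
    have : mdot V (-A) = mdot V ((-1 : ℝ) • A) := by norm_num
    rw [this, mdot_smul_right, horthA]; ring
  have horthB' : mdot V (-B) = 0 := by
    have : mdot V (-B) = mdot V ((-1 : ℝ) • B) := by norm_num
    rw [this, mdot_smul_right, horthB]; ring
  have hA' : (-A : Fin (N+1) → ℝ) ≠ 0 := fun h => hA (by simpa using congrArg Neg.neg h)
  have hB' : (-B : Fin (N+1) → ℝ) ≠ 0 := fun h => hB (by simpa using congrArg Neg.neg h)
  obtain ⟨_, hcA'⟩ := orth_key hV hVnorm horthA' hA'
  obtain ⟨_, hcB'⟩ := orth_key hV hVnorm horthB' hB'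
  rw [mdot_neg_neg] at hcA' hcB'
  set sa := Real.sqrt (mdot A A) with hsa
  set sb := Real.sqrt (mdot B B) with hsb
  -- expansion lemma
  have expand : ∀ (X Y : Fin (N+1) → ℝ),
      Tbil T (sa • V + X) (sb • V + Y) =
        sa * sb * Tbil T V V + sa * Tbil T V Y + sb * Tbil T X V + Tbil T X Y := by
    intro X Y
    rw [Tbil_add_left, Tbil_add_right, Tbil_add_right, Tbil_smul_left, Tbil_smul_left,
      Tbil_smul_right, Tbil_smul_right]
    ring
  have h1 := Tbil_nonneg T hsymm hdec hcA hcB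
  have h2 := Tbil_nonneg T hsymm hdec hcA' hcB'
  have h3 := Tbil_nonneg T hsymm hdec hcA hcB'
  have h4 := Tbil_nonneg T hsymm hdec hcA' hcB
  rw [expand A B] at h1
  rw [expand (-A) (-B)] at h2
  rw [expand A (-B)] at h3
  rw [expand (-A) B] at h4
  have hTnegA : ∀ Y, Tbil T (-A) Y = -(Tbil T A Y) := by
    intro Y
    have : Tbil T (-A) Y = Tbil T ((-1 : ℝ) • A) Y := by norm_num
    rw [this, Tbil_smul_left]; ring
  have hTnegB : ∀ X, Tbil T X (-B) = -(Tbil T X B) := by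
    intro X
    have : Tbil T X (-B) = Tbil T X ((-1 : ℝ) • B) := by norm_num
    rw [this, Tbil_smul_right]; ring
  rw [hTnegA, hTnegB, hTnegA, hTnegB] at *
  rw [abs_le]
  constructor <;> nlinarith
end
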